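/- In the Flock migration protocol with threshold η < 1, every executed migration strictly decreases the potential, hence no outcome can be revisited and the protocol converges to a Nash-like stable outcome (where no player satisfies the migration condition) in finitely many rounds. -/

import Mathlib

open Finset

/-- Load on resource `x` in outcome `σ`. -/
def load {V A : Type*} [Fintype V] [DecidableEq A]
    (u : V → A → ℝ) (σ : V → A) (x : A) : ℝ :=
  ∑ i, if σ i = x then u i (σ i) else 0

/-- Flock migration condition: player `i` at `σ i` may migrate to `y` when
`u_i(y) · f(w_y + u_i(y)) ≤ η · u_i(x) · f(w_x − u_i(x))`. -/
def flockStep {V A : Type*} [Fintype V] [DecidableEq A]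
    (u : V → A → ℝ) (f : ℝ → ℝ) (η : ℝ) (σ : V → A) (i : V) (y : A) : Prop :=
  u i y * f (load u σ y + u i y) ≤
    η * (u i (σ i) * f (load u σ (σ i) - u i (σ i)))

section Aux

variable {V A : Type*} [Fintype V] [DecidableEq A]

lemma load_nonneg (u : V → A → ℝ) (hu : ∀ i x, 0 < u i x) (σ : V → A) (x : A) :
    0 ≤ load u σ x := by
  refine Finset.sum_nonneg fun j _ => ?_
  by_cases h : σ j = x
  · simp only [h, if_pos rfl]
    exact h ▸ (hu j (σ j)).le
  · simp [h]

lemma le_load (u : V → A → ℝ) (hu : ∀ i x, 0 < u i x) (σ : V → A) (i : V) :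
    u i (σ i) ≤ load u σ (σ i) := by
  have h := Finset.single_le_sum
    (f := fun j => if σ j = σ i then u j (σ j) else 0)
    (fun j _ => by
      by_cases h : σ j = σ i
      · simp only [h, if_pos rfl]
        exact h ▸ (hu j (σ j)).le
      · simp [h])
    (Finset.mem_univ i)
  simpa [load] using h

lemma load_update [DecidableEq V] (u : V → A → ℝ) (σ : V → A) (i : V) (y : A) (z : A) :
    load u (Function.update σ i y) z
      = (if y = z then u i y else 0)
        + (load u σ z - (if σ i = z then u i (σ i) else 0)) := by
  unfold load
  have hfun : (fun j => if Function.update σ i y j = z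
        then u j (Function.update σ i y j) else 0)
      = Function.update (fun j => if σ j = z then u j (σ j) else 0) i
          (if y = z then u i y else 0) := by
    funext j
    by_cases hj : j = i
    · subst hj; simp [Function.update_self]
    · simp [Function.update_of_ne hj]
  rw [hfun, Finset.sum_update_of_mem (Finset.mem_univ i),
    Finset.sdiff_singleton_eq_erase, Finset.sum_erase_eq_sub (Finset.mem_univ i)]

end Aux

theorem stmt_4 {V A : Type*} [Fintype V] [Fintype A] [DecidableEq V] [DecidableEq A]
    (u : V → A → ℝ) (hu : ∀ i x, 0 < u i x)
    (f : ℝ → ℝ)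
    (hf_mono : ∀ w₁ w₂ : ℝ, 0 ≤ w₁ → w₁ ≤ w₂ → f w₁ ≤ f w₂)
    (hf_pos : ∀ w : ℝ, 0 ≤ w → 0 < f w)
    (η : ℝ) (hη : η < 1)
    (seq : ℕ → (V → A))
    (hstep : ∀ n : ℕ, ∃ (i : V) (y : A), y ≠ seq n i ∧
        flockStep u f η (seq n) i y ∧
        seq (n + 1) = Function.update (seq n) i y) :
    False := by
  -- the potential: sum over resources of ∫₀^{load} f
  set F : ℝ → ℝ := fun w => ∫ t in (0:ℝ)..w, f t with hF
  set Φ : (V → A) → ℝ := fun σ => ∑ x, F (load u σ x) with hΦ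
  -- integrability of f on nonnegative intervals
  have hint : ∀ c d : ℝ, 0 ≤ c → c ≤ d → IntervalIntegrable f MeasureTheory.volume c d := by
    intro c d hc hcd
    refine MonotoneOn.intervalIntegrable ?_
    intro s hs t ht hst
    rw [Set.uIcc_of_le hcd] at hs ht
    exact hf_mono s t (hc.trans hs.1) hst
  have hFdiff : ∀ c d : ℝ, 0 ≤ c → c ≤ d → F d - F c = ∫ t in c..d, f t := by
    intro c d hc hcd
    exact intervalIntegral.integral_interval_sub_left
      (hint 0 d le_rfl (hc.trans hcd)) (hint 0 c le_rfl hc)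
  have hupper : ∀ c d : ℝ, 0 ≤ c → c ≤ d → (∫ t in c..d, f t) ≤ (d - c) * f d := by
    intro c d hc hcd
    have h := intervalIntegral.integral_mono_on hcd (hint c d hc hcd)
      (intervalIntegrable_const (c := f d))
      (fun x hx => hf_mono x d (hc.trans hx.1) hx.2)
    simpa using h
  have hlower : ∀ c d : ℝ, 0 ≤ c → c ≤ d → (d - c) * f c ≤ ∫ t in c..d, f t := by
    intro c d hc hcd
    have h := intervalIntegral.integral_mono_on hcd
      (intervalIntegrable_const (c := f c)) (hint c d hc hcd)
      (fun x hx => hf_mono c x hc hx.1)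
    simpa using h
  -- each step strictly decreases Φ
  have hdec : ∀ n, Φ (seq (n+1)) < Φ (seq n) := by
    intro n
    obtain ⟨i, y, hy, hcond, hupd⟩ := hstep n
    set σ : V → A := seq n with hσ
    set x₀ : A := σ i with hx₀
    have hxy : x₀ ≠ y := fun h => hy (h.symm)
    set a : ℝ := u i y with ha
    set b : ℝ := u i x₀ with hb
    have hapos : 0 < a := hu i y
    have hbpos : 0 < b := hu i x₀
    have hWy : 0 ≤ load u σ y := load_nonneg u hu σ y
    have hWx : 0 ≤ load u σ x₀ := load_nonneg u hu σ x₀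
    have hbW : b ≤ load u σ x₀ := le_load u hu σ i
    have hR : 0 ≤ load u σ x₀ - b := by linarith
    -- new loads
    have hly : load u (Function.update σ i y) y = load u σ y + a := by
      rw [load_update u σ i y y, if_pos rfl, if_neg (Ne.symm hy), ← ha]
      ring
    have hlx : load u (Function.update σ i y) x₀ = load u σ x₀ - b := by
      rw [load_update u σ i y x₀, if_neg (Ne.symm hxy), if_pos hx₀.symm, ← hx₀, ← hb]
      ring
    have hlz : ∀ z, z ≠ y → z ≠ x₀ → load u (Function.update σ i y) z = load u σ z := by
      intro z hzy hzx
      have h2 : σ i ≠ z := fun h => hzx (h.symm.trans hx₀.symm)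
      rw [load_update u σ i y z, if_neg (Ne.symm hzy), if_neg h2]
      ring
    -- the flock inequality
    have hflock : a * f (load u σ y + a) ≤ η * (b * f (load u σ x₀ - b)) := hcond
    -- sum splits
    have hsum : Φ (seq (n+1)) - Φ σ
        = (F (load u σ x₀ - b) - F (load u σ x₀))
          + (F (load u σ y + a) - F (load u σ y)) := by
      have hsub : ({x₀, y} : Finset A) ⊆ Finset.univ := Finset.subset_univ _
      have hzero : ∀ z ∈ Finset.univ, z ∉ ({x₀, y} : Finset A) →
          (F (load u (Function.update σ i y) z) - F (load u σ z)) = 0 := by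
        intro z _ hz
        simp only [Finset.mem_insert, Finset.mem_singleton] at hz
        push_neg at hz
        rw [hlz z hz.2 hz.1]
        ring
      rw [hupd]
      simp only [hΦ]
      rw [← Finset.sum_sub_distrib, ← Finset.sum_subset hsub hzero,
        Finset.sum_pair hxy, hlx, hly]
    have hterm1 : F (load u σ x₀ - b) - F (load u σ x₀) ≤ -(b * f (load u σ x₀ - b)) := by
      have heq : F (load u σ x₀) - F (load u σ x₀ - b)
          = ∫ t in (load u σ x₀ - b)..(load u σ x₀), f t :=
        hFdiff _ _ hR (by linarith)
      have hlo := hlower (load u σ x₀ - b) (load u σ x₀) hR (by linarith)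
      have : b * f (load u σ x₀ - b) ≤ F (load u σ x₀) - F (load u σ x₀ - b) := by
        rw [heq]
        have hco : load u σ x₀ - (load u σ x₀ - b) = b := by ring
        calc b * f (load u σ x₀ - b)
            = (load u σ x₀ - (load u σ x₀ - b)) * f (load u σ x₀ - b) := by rw [hco]
          _ ≤ _ := hlo
      linarith
    have hterm2 : F (load u σ y + a) - F (load u σ y) ≤ a * f (load u σ y + a) := by
      have heq : F (load u σ y + a) - F (load u σ y)
          = ∫ t in (load u σ y)..(load u σ y + a), f t :=
        hFdiff _ _ hWy (by linarith)
      have hup := hupper (load u σ y) (load u σ y + a) hWy (by linarith)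
      rw [heq]
      calc (∫ t in (load u σ y)..(load u σ y + a), f t)
          ≤ (load u σ y + a - load u σ y) * f (load u σ y + a) := hup
        _ = a * f (load u σ y + a) := by ring
    have hfRpos : 0 < b * f (load u σ x₀ - b) :=
      mul_pos hbpos (hf_pos _ hR)
    have : Φ (seq (n+1)) - Φ σ < 0 := by
      have h1 : Φ (seq (n+1)) - Φ σ
          ≤ -(b * f (load u σ x₀ - b)) + η * (b * f (load u σ x₀ - b)) := by
        rw [hsum]
        have := hterm2.trans hflock
        linarith
      have h2 : -(b * f (load u σ x₀ - b)) + η * (b * f (load u σ x₀ - b))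
          = (η - 1) * (b * f (load u σ x₀ - b)) := by ring
      have h3 : (η - 1) * (b * f (load u σ x₀ - b)) < 0 :=
        mul_neg_of_neg_of_pos (by linarith) hfRpos
      linarith
    linarith
  -- strictly decreasing real sequence on a finite outcome space: contradiction
  have hanti : StrictAnti (fun n => Φ (seq n)) := strictAnti_nat_of_succ_lt hdec
  obtain ⟨m, k, hmk, hseq⟩ := Finite.exists_ne_map_eq_of_infinite seq
  have : Φ (seq m) = Φ (seq k) := by rw [hseq]
  exact hmk (hanti.injective this)
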